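/- Let δ be a denial constraint that does not use inequality atoms, D a database, E and E' equivalence relations on Obj(D), and V and V' equivalence relations on Cells(D). If D_{E,V} ⊭ δ and E ∪ V ⊆ E' ∪ V', then D_{E',V'} ⊭ δ. In other words, a violation of an inequality-free denial constraint cannot be repaired by performing additional merges. -/

import Mathlib

/- Core formalization of the LACE entity-resolution framework with optimality criteria
   (Bienvenu, Cima, Gutiérrez-Basulto 2022/2023 and the present paper). -/

namespace LACE

/-- Constants (objects, values, tuple identifiers) are modelled as natural numbers. -/
abbrev Const := ℕ
/-- Relation names. -/
abbrev RelName := ℕ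
/-- A cell is a pair (tuple identifier, position). -/
abbrev Cell := Const × ℕ

/-- A fact `R(t, c₁, …, c_k)` of a TID-annotated database. -/
structure Fact where
  rel : RelName
  tid : Const
  args : List Const
deriving DecidableEq

/-- A database is a finite set of facts. -/
abbrev Database := Finset Fact

/-- A schema: which (relation, position) pairs are object positions,
    together with the fixed similarity relation `≈` on constants. -/
structure Schema where
  isObjPos : RelName → ℕ → Bool
  sim : Const → Const → Prop

/-- `Obj(D)`: the object constants occurring in `D`. -/
def objs (S : Schema) (D : Database) : Set Const :=
  {c | ∃ f ∈ D, ∃ i, f.args[i]? = some c ∧ S.isObjPos f.rel i = true}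

/-- `Cells(D)`: the value cells of `D`. -/
def cells (S : Schema) (D : Database) : Set Cell :=
  {cl | ∃ f ∈ D, ∃ i, i < f.args.length ∧ S.isObjPos f.rel i = false ∧ cl = (f.tid, i)}

/-- The value(s) stored in a cell of `D`. -/
def cellValues (D : Database) (cl : Cell) : Set Const :=
  {c | ∃ f ∈ D, f.tid = cl.1 ∧ f.args[cl.2]? = some c}

/-- An extended fact: components are sets of constants (the tid component is a singleton). -/
structure ExtFact where
  rel : RelName
  tid : Set Const
  args : List (Set Const)

/-- `R` is an equivalence relation on the set `A` (as a set of ordered pairs ⊆ A × A). -/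
def IsEqRelOn {α : Type*} (A : Set α) (R : α → α → Prop) : Prop :=
  (∀ a b, R a b → a ∈ A ∧ b ∈ A) ∧ (∀ a ∈ A, R a a) ∧
  (∀ a b, R a b → R b a) ∧ (∀ a b c, R a b → R b c → R a c)

/-- `EqRel(B, A)`: the smallest equivalence relation on `A` containing the pairs of `B`
    (where `B` relates only elements of `A`). -/
def eqRelOn {α : Type*} (A : Set α) (B : α → α → Prop) : α → α → Prop :=
  fun a b => (a = b ∧ a ∈ A) ∨ (a ≠ b ∧ Relation.EqvGen B a b)

/-- The extended fact induced by a fact `f` of `D`, given an equivalence relation `E`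
    on objects and `V` on cells: object constants are replaced by their `E`-class, and
    values by the values of all `V`-equivalent cells. -/
def extFactOf (S : Schema) (D : Database) (E : Const → Const → Prop)
    (V : Cell → Cell → Prop) (f : Fact) : ExtFact :=
  ⟨f.rel, {f.tid},
   f.args.mapIdx (fun i c =>
     if S.isObjPos f.rel i then {c' | E c c'}
     else {c' | ∃ cl', V (f.tid, i) cl' ∧ c' ∈ cellValues D cl'})⟩

/-- The extended database `D_{E,V}`. -/
def extDB (S : Schema) (D : Database) (E : Const → Const → Prop)
    (V : Cell → Cell → Prop) : Set ExtFact :=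
  {ef | ∃ f ∈ D, ef = extFactOf S D E V f}

/-- Terms of queries: variables or constants. -/
inductive Term where
  | var (v : String)
  | const (c : Const)
deriving DecidableEq

/-- A relational atom `R(u₀, u₁, …, u_k)` (`u₀` is the tid position). -/
structure RAtom where
  rel : RelName
  tid : Term
  args : List Term

/-- A query: a conjunction of relational atoms, similarity atoms `u ≈ u'`,
    and inequality atoms `z ≠ z'`. -/
structure Query where
  ratoms : List RAtom
  sims : List (Term × Term)
  ineqs : List (Term × Term)

/-- The term at position `i` of atom `a` (position 0 is the tid). -/
def RAtom.termAt (a : RAtom) (i : ℕ) : Option Term :=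
  if i = 0 then some a.tid else a.args[i-1]?

/-- Term `t` occurs at position `i` of the `j`-th relational atom of `q`. -/
def occursAt (q : Query) (t : Term) (j i : ℕ) : Prop :=
  ∃ a, q.ratoms[j]? = some a ∧ a.termAt i = some t

/-- The function `h` determined by the functions `g_π` (Def. "queryeval", point 1). -/
def hOf (q : Query) (g : ℕ → ℕ → Set Const) : Term → Set Const
  | .const c => {c}
  | .var v => {c | ∀ j i, occursAt q (Term.var v) j i → c ∈ g j i}

/-- The terms occurring in a query. -/
def qTerms (q : Query) : Set Term :=
  {t | (∃ j i, occursAt q t j i) ∨ (∃ p ∈ q.sims, t = p.1 ∨ t = p.2) ∨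
       (∃ p ∈ q.ineqs, t = p.1 ∨ t = p.2)}

/-- Satisfaction of a Boolean query in the extended database `D_{E,V}`
    (Definition 2 of Bienvenu, Cima, Gutiérrez-Basulto 2023). -/
def Query.holds (S : Schema) (D : Database) (E : Const → Const → Prop)
    (V : Cell → Cell → Prop) (q : Query) : Prop :=
  ∃ g : ℕ → ℕ → Set Const,
    (∀ t ∈ qTerms q, (hOf q g t).Nonempty) ∧
    (∀ j a, q.ratoms[j]? = some a →
      (ExtFact.mk a.rel (g j 0) ((List.range a.args.length).map (fun i => g j (i+1)))
        ∈ extDB S D E V) ∧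
      (∀ i c, a.termAt i = some (Term.const c) → c ∈ g j i)) ∧
    (∀ p ∈ q.ineqs, hOf q g p.1 ∩ hOf q g p.2 = ∅) ∧
    (∀ p ∈ q.sims, ∃ c ∈ hOf q g p.1, ∃ c' ∈ hOf q g p.2, S.sim c c')

/-- Substitution of a constant for a variable in a term. -/
def Term.substV (t : Term) (x : String) (c : Const) : Term :=
  match t with
  | .var v => if v = x then .const c else .var v
  | .const d => .const d

/-- Substitution in a relational atom. -/
def RAtom.substV (a : RAtom) (x : String) (c : Const) : RAtom :=
  ⟨a.rel, a.tid.substV x c, a.args.map (fun t => t.substV x c)⟩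

/-- Substitution in a query. -/
def Query.substV (q : Query) (x : String) (c : Const) : Query :=
  ⟨q.ratoms.map (fun a => a.substV x c),
   q.sims.map (fun p => (p.1.substV x c, p.2.substV x c)),
   q.ineqs.map (fun p => (p.1.substV x c, p.2.substV x c))⟩

/-- Simultaneous substitution of an answer tuple for the answer variables. -/
def substAll (q : Query) (l : List (String × Const)) : Query :=
  l.foldl (fun q' p => q'.substV p.1 p.2) q

/-- A merging rule for objects: `q(x, y) → EqO(x, y)`. -/
structure ObjRule where
  body : Query
  x : String
  y : String

/-- A merging rule for values: `q(x_t, y_t) → EqV(⟨x_t, i⟩, ⟨y_t, i'⟩)`. -/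
structure ValRule where
  body : Query
  xt : String
  yt : String
  i : ℕ
  i' : ℕ

/-- An ER specification `Σ = ⟨Γ_O, Γ_V, Δ⟩` with hard and soft rules and
    denial constraints (a denial constraint `∀ ȳ. ¬φ(ȳ)` is given by its body `φ`). -/
structure ERSpec where
  hardO : List ObjRule
  softO : List ObjRule
  hardV : List ValRule
  softV : List ValRule
  dcs : List Query

/-- A (candidate) pair `⟨E, V⟩`. -/
structure State where
  E : Const → Const → Prop
  V : Cell → Cell → Prop

/-- The unordered pair `{o, o'}` of distinct objects is active w.r.t. an object rule. -/
def activeO (S : Schema) (D : Database) (s : State) (r : ObjRule) (p : Sym2 Const) : Prop :=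
  ∃ o o', p = s(o, o') ∧ o ≠ o' ∧ o ∈ objs S D ∧ o' ∈ objs S D ∧
    Query.holds S D s.E s.V ((r.body.substV r.x o).substV r.y o')

/-- The unordered pair of distinct cells is active w.r.t. a value rule. -/
def activeV (S : Schema) (D : Database) (s : State) (r : ValRule) (p : Sym2 Cell) : Prop :=
  ∃ t t', p = s(((t, r.i) : Cell), ((t', r.i') : Cell)) ∧
    ((t, r.i) : Cell) ≠ (t', r.i') ∧ ((t, r.i) : Cell) ∈ cells S D ∧
    ((t', r.i') : Cell) ∈ cells S D ∧
    Query.holds S D s.E s.V ((r.body.substV r.xt t).substV r.yt t')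

/-- Result of merging an active object pair and closing under equivalence. -/
def addO (S : Schema) (D : Database) (s : State) (p : Sym2 Const) : State :=
  ⟨eqRelOn (objs S D) (fun a b => s.E a b ∨ s(a, b) = p), s.V⟩

/-- Result of merging an active cell pair and closing under equivalence. -/
def addV (S : Schema) (D : Database) (s : State) (p : Sym2 Cell) : State :=
  ⟨s.E, eqRelOn (cells S D) (fun a b => s.V a b ∨ s(a, b) = p)⟩

/-- One step: apply a merge that is active w.r.t. some (hard or soft) rule. -/
def Step (S : Schema) (D : Database) (sp : ERSpec) (s s' : State) : Prop :=
  (∃ r ∈ sp.hardO ++ sp.softO, ∃ p, activeO S D s r p ∧ s' = addO S D s p) ∨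
  (∃ r ∈ sp.hardV ++ sp.softV, ∃ p, activeV S D s r p ∧ s' = addV S D s p)

/-- The trivial (identity) pair of equivalence relations. -/
def trivState (S : Schema) (D : Database) : State :=
  ⟨eqRelOn (objs S D) (fun _ _ => False), eqRelOn (cells S D) (fun _ _ => False)⟩

/-- All hard rules are satisfied: every pair active w.r.t. a hard rule is merged. -/
def satHard (S : Schema) (D : Database) (sp : ERSpec) (s : State) : Prop :=
  (∀ r ∈ sp.hardO, ∀ o o', activeO S D s r s(o, o') → s.E o o') ∧
  (∀ r ∈ sp.hardV, ∀ c c', activeV S D s r s(c, c') → s.V c c')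

/-- All denial constraints are satisfied in `D_{E,V}`. -/
def satDCs (S : Schema) (D : Database) (sp : ERSpec) (s : State) : Prop :=
  ∀ q ∈ sp.dcs, ¬ Query.holds S D s.E s.V q

/-- `⟨E, V⟩ ∈ Sol(D, Σ)`: obtained from the trivial pair by iteratively applying
    active merges, satisfying all hard rules and all denial constraints. -/
def Sol (S : Schema) (D : Database) (sp : ERSpec) (s : State) : Prop :=
  Relation.ReflTransGen (Step S D sp) (trivState S D) s ∧
  satHard S D sp s ∧ satDCs S D sp s

/-- A merge: an unordered pair of objects or of cells. -/
abbrev MPair := Sym2 Const ⊕ Sym2 Cell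
/-- A rule of the specification. -/
abbrev Rule := ObjRule ⊕ ValRule

/-- `actP(D, E, V, Σ)`: the set of pairs `(p, r)` with `p` active w.r.t. rule `r`. -/
def activeP (S : Schema) (D : Database) (sp : ERSpec) (s : State) : Set (MPair × Rule) :=
  {pr | (∃ p r, pr = (Sum.inl p, Sum.inl r) ∧ r ∈ sp.hardO ++ sp.softO ∧ activeO S D s r p) ∨
        (∃ p r, pr = (Sum.inr p, Sum.inr r) ∧ r ∈ sp.hardV ++ sp.softV ∧ activeV S D s r p)}

/-- A rule is soft. -/
def softRule (sp : ERSpec) : Rule → Prop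
  | .inl r => r ∈ sp.softO
  | .inr r => r ∈ sp.softV

/-- The merge `p` has been performed in `⟨E, V⟩`. -/
def merged (s : State) : MPair → Prop
  | .inl p => ∃ o o', p = s(o, o') ∧ s.E o o'
  | .inr p => ∃ c c', p = s(c, c') ∧ s.V c c'

/-- The set `E ∪ V` of performed merges, as ordered pairs. -/
def mergeSet (s : State) : Set ((Const × Const) ⊕ (Cell × Cell)) :=
  {x | match x with
       | .inl p => s.E p.1 p.2
       | .inr p => s.V p.1 p.2}

/-- `supp(E, V)`: the active pairs, with their supporting rules, that belong to `E ∪ V`. -/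
def suppSet (S : Schema) (D : Database) (sp : ERSpec) (s : State) : Set (MPair × Rule) :=
  {pr | pr ∈ activeP S D sp s ∧ merged s pr.1}

/-- `abs(E, V)`: the active pairs that are absent from `E ∪ V`. -/
def absSet (S : Schema) (D : Database) (sp : ERSpec) (s : State) : Set MPair :=
  {p | (∃ r, (p, r) ∈ activeP S D sp s) ∧ ¬ merged s p}

/-- `viol(E, V)`: the violated soft rules, i.e. pairs `(p, σ)` with `σ` soft,
    `p` active w.r.t. `σ` but not merged. -/
def violSet (S : Schema) (D : Database) (sp : ERSpec) (s : State) : Set (MPair × Rule) :=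
  {pr | pr ∈ activeP S D sp s ∧ softRule sp pr.2 ∧ ¬ merged s pr.1}

/-- The optimality criteria. -/
inductive Crit where
  | maxES | maxSS | maxEC | maxSC | minAS | minAC | minVS | minVC

/-- `better X s' s`: solution `s'` is strictly better than `s` according to criterion `X`. -/
def better (S : Schema) (D : Database) (sp : ERSpec) : Crit → State → State → Prop
  | .maxES, s', s => mergeSet s ⊂ mergeSet s'
  | .maxSS, s', s => suppSet S D sp s ⊂ suppSet S D sp s'
  | .maxEC, s', s => (mergeSet s).ncard < (mergeSet s').ncard
  | .maxSC, s', s => (suppSet S D sp s).ncard < (suppSet S D sp s').ncard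
  | .minAS, s', s => absSet S D sp s' ⊂ absSet S D sp s
  | .minAC, s', s => (absSet S D sp s').ncard < (absSet S D sp s).ncard
  | .minVS, s', s => violSet S D sp s' ⊂ violSet S D sp s
  | .minVC, s', s => (violSet S D sp s').ncard < (violSet S D sp s).ncard

/-- `OptSol_X(D, Σ)`: the set of `X`-optimal solutions. -/
def OptSol (S : Schema) (D : Database) (sp : ERSpec) (X : Crit) : Set State :=
  {s | Sol S D sp s ∧ ∀ s', Sol S D sp s' → ¬ better S D sp X s' s}

/-- The restricted setting: no denial constraint uses inequality atoms. -/
def noIneqDCs (sp : ERSpec) : Prop := ∀ q ∈ sp.dcs, q.ineqs = []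

end LACE
namespace LACE

private lemma extFactOf_args_mono (S : Schema) (D : Database)
    (E E' : Const → Const → Prop) (V V' : Cell → Cell → Prop)
    (hE : ∀ a b, E a b → E' a b) (hV : ∀ a b, V a b → V' a b)
    (f : Fact) (i : ℕ) (s s' : Set Const)
    (hs : (extFactOf S D E V f).args[i]? = some s)
    (hs' : (extFactOf S D E' V' f).args[i]? = some s') :
    s ⊆ s' := by
  simp only [extFactOf, List.getElem?_mapIdx] at hs hs'
  cases h : f.args[i]? with
  | none => simp [h] at hs
  | some c =>
    rw [h] at hs hs'
    simp only [Option.map_some, Option.some.injEq] at hs hs'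
    subst hs; subst hs'
    by_cases hp : S.isObjPos f.rel i
    · simp only [hp, if_true]
      intro x hx
      exact hE _ _ hx
    · simp only [hp, if_false, Bool.false_eq_true]
      rintro x ⟨cl', h1, h2⟩
      exact ⟨cl', hV _ _ h1, h2⟩

/-- Lemma "NoMoreMerg": let `δ = ∀ȳ.¬φ(ȳ)` be a denial constraint
that does not use inequality atoms (given by its body `φ`), `D` a database, `E, E'`
equivalence relations on `Obj(D)` and `V, V'` equivalence relations on `Cells(D)`.
If `D_{E,V} ⊭ δ` (i.e. `D_{E,V} ⊨ ∃ȳ.φ(ȳ)`) and `E ∪ V ⊆ E' ∪ V'`, then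
`D_{E',V'} ⊭ δ`: a violation of an inequality-free denial constraint cannot be
repaired by performing additional merges. -/
theorem dc_violation_monotone (S : Schema) (D : Database)
    (dcBody : Query) (hdc : dcBody.ineqs = [])
    (E E' : Const → Const → Prop) (V V' : Cell → Cell → Prop)
    (hE : IsEqRelOn (objs S D) E) (hE' : IsEqRelOn (objs S D) E')
    (hV : IsEqRelOn (cells S D) V) (hV' : IsEqRelOn (cells S D) V')
    (hsub : mergeSet ⟨E, V⟩ ⊆ mergeSet ⟨E', V'⟩)
    (hviol : Query.holds S D E V dcBody) :
    Query.holds S D E' V' dcBody := by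
  classical
  obtain ⟨g, hne, hrat, _hineq, hsim⟩ := hviol
  have hEsub : ∀ a b, E a b → E' a b := fun a b h =>
    hsub (show (Sum.inl (a, b) : (Const × Const) ⊕ (Cell × Cell)) ∈ mergeSet ⟨E, V⟩ from h)
  have hVsub : ∀ a b, V a b → V' a b := fun a b h =>
    hsub (show (Sum.inr (a, b) : (Const × Const) ⊕ (Cell × Cell)) ∈ mergeSet ⟨E, V⟩ from h)
  have hex : ∀ j (h : ∃ a, dcBody.ratoms[j]? = some a),
      ∃ f, f ∈ D ∧ ExtFact.mk h.choose.rel (g j 0)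
        ((List.range h.choose.args.length).map (fun i => g j (i+1)))
        = extFactOf S D E V f :=
    fun j h => (hrat j h.choose h.choose_spec).1
  let pickF : ℕ → Fact := fun j =>
    if h : ∃ a, dcBody.ratoms[j]? = some a then (hex j h).choose else ⟨0, 0, []⟩
  let g' : ℕ → ℕ → Set Const := fun j i =>
    if h : ∃ a, dcBody.ratoms[j]? = some a then
      (if i = 0 then {(pickF j).tid}
       else ((extFactOf S D E' V' (pickF j)).args[i-1]?).getD ∅)
    else g j i
  have hpick : ∀ j a, dcBody.ratoms[j]? = some a →
      pickF j ∈ D ∧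
      ExtFact.mk a.rel (g j 0) ((List.range a.args.length).map (fun i => g j (i+1)))
        = extFactOf S D E V (pickF j) := by
    intro j a hja
    have h : ∃ a, dcBody.ratoms[j]? = some a := ⟨a, hja⟩
    have hca : h.choose = a := Option.some.inj (h.choose_spec.symm.trans hja)
    have h1 := (hex j h).choose_spec
    have hp : pickF j = (hex j h).choose := dif_pos h
    rw [← hca, hp]
    exact ⟨h1.1, h1.2⟩
  have hdecomp : ∀ j a, dcBody.ratoms[j]? = some a →
      a.rel = (pickF j).rel ∧ g j 0 = {(pickF j).tid} ∧
      a.args.length = (pickF j).args.length ∧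
      ∀ i, i < a.args.length →
        (extFactOf S D E V (pickF j)).args[i]? = some (g j (i+1)) := by
    intro j a hja
    obtain ⟨-, heq⟩ := hpick j a hja
    have h1 : a.rel = (extFactOf S D E V (pickF j)).rel := congrArg ExtFact.rel heq
    have h2 : g j 0 = (extFactOf S D E V (pickF j)).tid := congrArg ExtFact.tid heq
    have h3 : (List.range a.args.length).map (fun i => g j (i+1))
        = (extFactOf S D E V (pickF j)).args := congrArg ExtFact.args heq
    refine ⟨h1, h2, ?_, ?_⟩
    · have hl := congrArg List.length h3
      simpa [extFactOf] using hl
    · intro i hi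
      rw [← h3, List.getElem?_map, List.getElem?_range hi, Option.map_some]
  have hg'eq : ∀ j, (∃ a, dcBody.ratoms[j]? = some a) → ∀ i,
      g' j i = (if i = 0 then {(pickF j).tid}
        else ((extFactOf S D E' V' (pickF j)).args[i-1]?).getD ∅) := by
    intro j h i
    show dite _ _ _ = _
    rw [dif_pos h]
  have gsub : ∀ j i a, dcBody.ratoms[j]? = some a →
      (i = 0 ∨ i - 1 < a.args.length) → g j i ⊆ g' j i := by
    intro j i a hja hi
    have h : ∃ a, dcBody.ratoms[j]? = some a := ⟨a, hja⟩
    obtain ⟨h1, h2, h3, h4⟩ := hdecomp j a hja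
    rcases Nat.eq_zero_or_pos i with rfl | hipos
    · rw [hg'eq j h 0, if_pos rfl, ← h2]
    · have hne0 : i ≠ 0 := Nat.pos_iff_ne_zero.mp hipos
      rcases hi with rfl | hi
      · exact absurd rfl hne0
      rw [hg'eq j h i, if_neg hne0]
      have hlen : i - 1 < (pickF j).args.length := h3 ▸ hi
      have hv : (pickF j).args[i-1]? = some ((pickF j).args[i-1]) :=
        List.getElem?_eq_getElem hlen
      have hsE' : (extFactOf S D E' V' (pickF j)).args[i-1]?
          = some (if S.isObjPos (pickF j).rel (i-1) = true
              then {c' | E' ((pickF j).args[i-1]) c'}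
              else {c' | ∃ cl', V' ((pickF j).tid, i-1) cl' ∧ c' ∈ cellValues D cl'}) := by
        simp [extFactOf, List.getElem?_mapIdx, hv]
      have hgi : (extFactOf S D E V (pickF j)).args[i-1]? = some (g j ((i-1)+1)) := h4 (i-1) hi
      rw [Nat.sub_add_cancel hipos] at hgi
      rw [hsE', Option.getD_some]
      exact extFactOf_args_mono S D E E' V V' hEsub hVsub (pickF j) (i-1) _ _ hgi hsE'
  have hvalid : ∀ (a : RAtom) (i : ℕ) (t : Term), RAtom.termAt a i = some t →
      i = 0 ∨ i - 1 < a.args.length := by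
    intro a i t ht
    by_cases h0 : i = 0
    · exact Or.inl h0
    · right
      simp only [RAtom.termAt, if_neg h0] at ht
      exact (List.getElem?_eq_some_iff.mp ht).1
  have hOfmono : ∀ t, hOf dcBody g t ⊆ hOf dcBody g' t := by
    intro t c hc
    cases t with
    | const d => exact hc
    | var v =>
      intro j i hocc
      obtain ⟨a, hja, hterm⟩ := hocc
      exact gsub j i a hja (hvalid a i _ hterm) (hc j i ⟨a, hja, hterm⟩)
  refine ⟨g', ?_, ?_, ?_, ?_⟩
  · intro t ht
    obtain ⟨c, hc⟩ := hne t ht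
    exact ⟨c, hOfmono t hc⟩
  · intro j a hja
    have h : ∃ a, dcBody.ratoms[j]? = some a := ⟨a, hja⟩
    obtain ⟨hfD, -⟩ := hpick j a hja
    obtain ⟨h1, h2, h3, _h4⟩ := hdecomp j a hja
    constructor
    · refine ⟨pickF j, hfD, ?_⟩
      have htid : g' j 0 = {(pickF j).tid} := by rw [hg'eq j h 0, if_pos rfl]
      have hargs : (List.range a.args.length).map (fun i => g' j (i+1))
          = (extFactOf S D E' V' (pickF j)).args := by
        apply List.ext_getElem?
        intro n
        by_cases hn : n < a.args.length
        · have hlenf : n < (pickF j).args.length := h3 ▸ hn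
          have hv : (pickF j).args[n]? = some ((pickF j).args[n]) :=
            List.getElem?_eq_getElem hlenf
          rw [List.getElem?_map, List.getElem?_range hn, Option.map_some]
          rw [hg'eq j h (n+1), if_neg (Nat.succ_ne_zero n)]
          have : (n + 1) - 1 = n := rfl
          rw [this]
          simp [extFactOf, List.getElem?_mapIdx, hv]
        · have hlenf : ¬ n < (pickF j).args.length := h3 ▸ hn
          rw [List.getElem?_map]
          have hr1 : (List.range a.args.length)[n]? = none :=
            List.getElem?_eq_none (by simpa using Nat.le_of_not_lt hn)
          have hr2 : (extFactOf S D E' V' (pickF j)).args[n]? = none := by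
            apply List.getElem?_eq_none
            simpa [extFactOf] using Nat.le_of_not_lt hlenf
          rw [hr1, hr2, Option.map_none]
      rw [htid, hargs, h1]
      rfl
    · intro i c hterm
      exact gsub j i a hja (hvalid a i _ hterm) ((hrat j a hja).2 i c hterm)
  · intro p hp
    rw [hdc] at hp
    exact absurd hp List.not_mem_nil
  · intro p hp
    obtain ⟨c, hc, c', hc', hs⟩ := hsim p hp
    exact ⟨c, hOfmono _ hc, c', hOfmono _ hc', hs⟩

end LACE
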